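/- Let V*_real and V*_DT be the optimal value functions of two finite MDPs sharing state space S, action space A, and discount γ ∈ (0,1), with transition kernels P, P' and rewards R, R' respectively, and let d̄ be the DT bisimulation metric (the fixed point of d ↦ max_a { |R(s_i,a) − R'(s_j,a)| + γ W₁(P(·|s_i,a), P'(·|s_j,a); d) }). Then for all states s_i, s_j: |V*_real(s_i) − V*_DT(s_j)| ≤ d̄(s_i, s_j). -/
import Mathlib


open Finset Filter

variable {S A : Type*}

/-- A coupling of two distributions on a finite set: nonnegative matrix with
row marginals `P` and column marginals `Q`. -/
def IsCoupling [Fintype S] (P Q : S → ℝ) (lam : S → S → ℝ) : Prop :=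
  (∀ i j, 0 ≤ lam i j) ∧ (∀ i, ∑ j, lam i j = P i) ∧ (∀ j, ∑ i, lam i j = Q j)

/-- The 1-Wasserstein distance on a finite set with cost function `d`:
the minimal transport cost over all couplings of `P` and `Q`. -/
noncomputable def W1 [Fintype S] (P Q : S → ℝ) (d : S → S → ℝ) : ℝ :=
  sInf {c : ℝ | ∃ lam, IsCoupling P Q lam ∧ c = ∑ i, ∑ j, lam i j * d i j}

/-- `P` is a probability distribution on the finite set `S`. -/
def IsProbDist [Fintype S] (P : S → ℝ) : Prop := (∀ i, 0 ≤ P i) ∧ ∑ i, P i = 1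

/-- Total variation distance between two distributions on a finite set. -/
noncomputable def TVdist [Fintype S] (P Q : S → ℝ) : ℝ := (1/2) * ∑ i, |P i - Q i|

/-- The Bellman optimality operator of a finite MDP. -/
noncomputable def bellman [Fintype S] [Fintype A] [Nonempty A]
    (P : S → A → S → ℝ) (R : S → A → ℝ) (γ : ℝ) (V : S → ℝ) : S → ℝ :=
  fun s => ⨆ a : A, (R s a + γ * ∑ t, P s a t * V t)

/-- The DT-BSM operator `F` between two MDPs sharing state and action spaces. -/
noncomputable def Fop [Fintype S] [Fintype A] [Nonempty A]
    (P P' : S → A → S → ℝ) (R R' : S → A → ℝ) (γ : ℝ) (d : S → S → ℝ) : S → S → ℝ :=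
  fun i j => ⨆ a : A, (|R i a - R' j a| + γ * W1 (P i a) (P' j a) d)


private lemma bdd_range' {I : Type*} [Finite I] (f : I -> Real) : BddAbove (Set.range f) :=
  (Set.finite_range f).bddAbove

private lemma prod_coupling [Fintype S] {P Q : S -> Real} (hP : IsProbDist P) (hQ : IsProbDist Q) :
    IsCoupling P Q (fun i j => P i * Q j) := by
  refine ⟨fun i j => mul_nonneg (hP.1 i) (hQ.1 j), fun i => ?_, fun j => ?_⟩
  · rw [← Finset.mul_sum, hQ.2, mul_one]
  · simp only [← Finset.sum_mul, hP.2, one_mul]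

private lemma W1_exists_coupling [Fintype S] {P Q : S -> Real} (hP : IsProbDist P)
    (hQ : IsProbDist Q) (d : S -> S -> Real) {e : Real} (he : 0 < e) :
    ∃ lam, IsCoupling P Q lam ∧ ∑ i, ∑ j, lam i j * d i j < W1 P Q d + e := by
  have hne : {c : Real | ∃ lam, IsCoupling P Q lam ∧ c = ∑ i, ∑ j, lam i j * d i j}.Nonempty :=
    ⟨_, _, prod_coupling hP hQ, rfl⟩
  obtain ⟨c, hc, hlt⟩ := Real.lt_sInf_add_pos hne he
  obtain ⟨lam, hlam, rfl⟩ := hc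
  exact ⟨lam, hlam, hlt⟩

private lemma abs_ciSup_sub_ciSup {I : Type*} [Finite I] [Nonempty I] (f g : I -> Real) (C : Real)
    (h : ∀ a, |f a - g a| ≤ C) : |(⨆ a, f a) - ⨆ a, g a| ≤ C := by
  rw [abs_le]
  constructor
  · have h1 : (⨆ a, g a) ≤ (⨆ a, f a) + C := by
      apply ciSup_le
      intro a
      have := (abs_le.mp (h a)).1
      have hf : f a ≤ ⨆ b, f b := le_ciSup (bdd_range' f) a
      linarith
    linarith
  · have h1 : (⨆ a, f a) ≤ (⨆ a, g a) + C := by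
      apply ciSup_le
      intro a
      have := (abs_le.mp (h a)).2
      have hg : g a ≤ ⨆ b, g b := le_ciSup (bdd_range' g) a
      linarith
    linarith

theorem optimal_value_diff_le_DTBSM [Fintype S] [Nonempty S] [Fintype A] [Nonempty A]
    (P P' : S → A → S → ℝ) (R R' : S → A → ℝ) (γ Rmax : ℝ)
    (hγ : γ ∈ Set.Ioo (0:ℝ) 1)
    (hP : ∀ s a, IsProbDist (P s a)) (hP' : ∀ s a, IsProbDist (P' s a))
    (hRmax : Rmax = ⨆ i : S, ⨆ j : S, ⨆ a : A, |R i a - R' j a|)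
    (Vreal VDT : S → ℝ)
    (hVreal : bellman P R γ Vreal = Vreal)
    (hVDT : bellman P' R' γ VDT = VDT)
    (dbar : S → S → ℝ)
    (hdbar_mem : ∀ i j, dbar i j ∈ Set.Icc (0:ℝ) (Rmax / (1 - γ)))
    (hdbar_fix : Fop P P' R R' γ dbar = dbar) :
    ∀ i j, |Vreal i - VDT j| ≤ dbar i j := by
  obtain ⟨hg0, hg1⟩ := hγ
  set D := ⨆ p : S × S, (|Vreal p.1 - VDT p.2| - dbar p.1 p.2) with hD
  have hbdd : BddAbove (Set.range fun p : S × S => |Vreal p.1 - VDT p.2| - dbar p.1 p.2) :=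
    bdd_range' _
  have hle : ∀ i j, |Vreal i - VDT j| - dbar i j ≤ D := fun i j =>
    le_ciSup hbdd (i, j)
  have main : ∀ i j, |Vreal i - VDT j| ≤ dbar i j + γ * D := by
    intro i j
    have key : ∀ e > (0:ℝ), |Vreal i - VDT j| ≤ dbar i j + γ * D + γ * e := by
      intro e hepos
      have hact : ∀ a : A,
          |(R i a + γ * ∑ t, P i a t * Vreal t) - (R' j a + γ * ∑ t, P' j a t * VDT t)|
            ≤ dbar i j + γ * (D + e) := by
        intro a
        obtain ⟨lam, ⟨hlam0, hlamr, hlamc⟩, hcost⟩ :=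
          W1_exists_coupling (hP i a) (hP' j a) dbar hepos
        have hmass : ∑ t, ∑ u, lam t u = 1 := by
          calc ∑ t, ∑ u, lam t u = ∑ t, P i a t := by
                exact Finset.sum_congr rfl fun t _ => hlamr t
            _ = 1 := (hP i a).2
        have hsum : ∑ t, P i a t * Vreal t - ∑ u, P' j a u * VDT u
            = ∑ t, ∑ u, lam t u * (Vreal t - VDT u) := by
          have h1 : ∑ t, P i a t * Vreal t = ∑ t, ∑ u, lam t u * Vreal t := by
            refine Finset.sum_congr rfl fun t _ => ?_
            rw [← hlamr t, Finset.sum_mul]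
          have h2 : ∑ u, P' j a u * VDT u = ∑ t, ∑ u, lam t u * VDT u := by
            rw [Finset.sum_comm]
            refine Finset.sum_congr rfl fun u _ => ?_
            rw [← hlamc u, Finset.sum_mul]
          rw [h1, h2, ← Finset.sum_sub_distrib]
          refine Finset.sum_congr rfl fun t _ => ?_
          rw [← Finset.sum_sub_distrib]
          exact Finset.sum_congr rfl fun u _ => by ring
        have habs : |∑ t, P i a t * Vreal t - ∑ u, P' j a u * VDT u|
            ≤ (∑ t, ∑ u, lam t u * dbar t u) + D := by
          rw [hsum]
          calc |∑ t, ∑ u, lam t u * (Vreal t - VDT u)|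
              ≤ ∑ t, ∑ u, |lam t u * (Vreal t - VDT u)| := by
                refine (Finset.abs_sum_le_sum_abs _ _).trans ?_
                exact Finset.sum_le_sum fun t _ => Finset.abs_sum_le_sum_abs _ _
            _ ≤ ∑ t, ∑ u, lam t u * (dbar t u + D) := by
                refine Finset.sum_le_sum fun t _ => Finset.sum_le_sum fun u _ => ?_
                rw [abs_mul, abs_of_nonneg (hlam0 t u)]
                refine mul_le_mul_of_nonneg_left ?_ (hlam0 t u)
                have := hle t u
                linarith
            _ = (∑ t, ∑ u, lam t u * dbar t u) + D := by
                have : ∑ t, ∑ u, lam t u * (dbar t u + D)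
                    = (∑ t, ∑ u, lam t u * dbar t u) + (∑ t, ∑ u, lam t u) * D := by
                  rw [Finset.sum_mul, ← Finset.sum_add_distrib]
                  refine Finset.sum_congr rfl fun t _ => ?_
                  rw [Finset.sum_mul, ← Finset.sum_add_distrib]
                  exact Finset.sum_congr rfl fun u _ => by ring
                rw [this, hmass, one_mul]
        have hFle : |R i a - R' j a| + γ * W1 (P i a) (P' j a) dbar ≤ dbar i j := by
          have heq := congrFun (congrFun hdbar_fix i) j
          have hF : Fop P P' R R' γ dbar i j
              = ⨆ a : A, (|R i a - R' j a| + γ * W1 (P i a) (P' j a) dbar) := rfl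
          rw [← heq, hF]
          exact le_ciSup (bdd_range' fun a : A => |R i a - R' j a| + γ * W1 (P i a) (P' j a) dbar) a
        have habs' : |∑ t, P i a t * Vreal t - ∑ u, P' j a u * VDT u|
            ≤ W1 (P i a) (P' j a) dbar + e + D := by linarith
        calc |(R i a + γ * ∑ t, P i a t * Vreal t) - (R' j a + γ * ∑ t, P' j a t * VDT t)|
            ≤ |R i a - R' j a| + |γ * ∑ t, P i a t * Vreal t - γ * ∑ t, P' j a t * VDT t| := by
              have := abs_add_le (R i a - R' j a)
                (γ * ∑ t, P i a t * Vreal t - γ * ∑ t, P' j a t * VDT t)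
              calc |(R i a + γ * ∑ t, P i a t * Vreal t) - (R' j a + γ * ∑ t, P' j a t * VDT t)|
                  = |(R i a - R' j a) + (γ * ∑ t, P i a t * Vreal t - γ * ∑ t, P' j a t * VDT t)| := by
                    ring_nf
                _ ≤ _ := this
          _ ≤ |R i a - R' j a| + γ * (W1 (P i a) (P' j a) dbar + e + D) := by
              rw [← mul_sub, abs_mul, abs_of_pos hg0]
              have := mul_le_mul_of_nonneg_left habs' (le_of_lt hg0)
              linarith
          _ ≤ dbar i j + γ * (D + e) := by nlinarith [hg0]
      have hVi : Vreal i = ⨆ a : A, (R i a + γ * ∑ t, P i a t * Vreal t) :=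
        (congrFun hVreal i).symm
      have hVj : VDT j = ⨆ a : A, (R' j a + γ * ∑ t, P' j a t * VDT t) :=
        (congrFun hVDT j).symm
      rw [hVi, hVj]
      have := abs_ciSup_sub_ciSup (fun a : A => R i a + γ * ∑ t, P i a t * Vreal t)
        (fun a : A => R' j a + γ * ∑ t, P' j a t * VDT t) (dbar i j + γ * (D + e)) hact
      calc |(⨆ a : A, (R i a + γ * ∑ t, P i a t * Vreal t)) -
            ⨆ a : A, (R' j a + γ * ∑ t, P' j a t * VDT t)| ≤ dbar i j + γ * (D + e) := this
        _ = dbar i j + γ * D + γ * e := by ring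
    have : ∀ e > (0:ℝ), |Vreal i - VDT j| ≤ (dbar i j + γ * D) + e := by
      intro e he
      have h2 := key (e / γ) (div_pos he hg0)
      have : γ * (e / γ) = e := by field_simp
      linarith
    exact le_of_forall_pos_le_add this
  have hDle : D ≤ γ * D := by
    obtain ⟨p0, hp0⟩ := Finite.exists_max
      (fun p : S × S => |Vreal p.1 - VDT p.2| - dbar p.1 p.2)
    have hDeq : D = |Vreal p0.1 - VDT p0.2| - dbar p0.1 p0.2 := by
      refine le_antisymm (ciSup_le fun p => hp0 p) (le_ciSup hbdd p0)
    have := main p0.1 p0.2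
    linarith
  have hD0 : D ≤ 0 := by nlinarith
  intro i j
  have h1 := main i j
  nlinarith [hg0.le]
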